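/- Let p be a prime, A a finite alphabet, v ∈ A* a word, d ≥ 1 an integer, a ∈ F_p nonzero, M = a·(q−1)^d ∈ F_p[q], and R ∈ F_p[q] a polynomial of degree less than d. Then the language L = { u ∈ A* : binom_q(u,v) ≡ R (mod M) }, where binom_q(u,v) is reduced coefficientwise modulo p to an element of F_p[q], is a p-group language: there exist a finite group G whose order is a power of p, a monoid morphism μ : A* → G, and a subset S ⊆ G such that L = μ⁻¹(S). -/

import Mathlib

noncomputable def qbinAux {A : Type*} [DecidableEq A] : List A → List A → Polynomial ℕ
  | _, [] => 1
  | [], _ :: _ => 0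
  | a :: u, b :: v =>
      Polynomial.X ^ (v.length + 1) * qbinAux u (b :: v) +
        (if a = b then qbinAux u v else 0)

/-- The `q`-binomial coefficient `binom_q(u,v)` of two words. -/
noncomputable def qbin {A : Type*} [DecidableEq A] (u v : List A) : Polynomial ℕ :=
  qbinAux u.reverse v.reverse

open Polynomial Matrix

section MatrixAux

variable {K : Type*} [CommRing K]

lemma diagMulTri {m : ℕ} {M N : Matrix (Fin m) (Fin m) K}
    (hM : M.BlockTriangular id) (hN : N.BlockTriangular id) (i : Fin m) :
    (M * N) i i = M i i * N i i := by
  rw [Matrix.mul_apply]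
  apply Finset.sum_eq_single i
  · intro k _ hk
    rcases lt_or_gt_of_ne hk with h | h
    · rw [hM (show (id k : Fin m) < id i from h), zero_mul]
    · rw [hN (show (id i : Fin m) < id k from h), mul_zero]
  · intro h; exact absurd (Finset.mem_univ i) h

lemma triPowDvd (t : K) {m : ℕ} {M : Matrix (Fin m) (Fin m) K}
    (htri : M.BlockTriangular id) (hdiag : ∀ i, t ∣ M i i) :
    ∀ k (i j : Fin m), (j : ℕ) < (i : ℕ) + k → t ∣ (M ^ k) i j := by
  intro k
  induction k with
  | zero =>
    intro i j h
    rw [pow_zero, Matrix.one_apply_ne (by simp at h ⊢; omega)]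
    exact dvd_zero t
  | succ k ih =>
    intro i j h
    rw [pow_succ', Matrix.mul_apply]
    apply Finset.dvd_sum
    intro l _
    rcases lt_trichotomy (l : ℕ) (i : ℕ) with hl | hl | hl
    · rw [htri (show (id l : Fin m) < id i from hl), zero_mul]
      exact dvd_zero t
    · have : l = i := Fin.ext hl
      subst this
      exact Dvd.dvd.mul_right (hdiag l) _
    · exact Dvd.dvd.mul_left (ih l j (by omega)) _

lemma entriesPowDvd (t : K) {m : ℕ} (A : Matrix (Fin m) (Fin m) K)
    (h : ∀ i j, t ∣ A i j) : ∀ s (i j : Fin m), t ^ s ∣ (A ^ s) i j := by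
  intro s
  induction s with
  | zero => intro i j; simp
  | succ s ih =>
    intro i j
    rw [pow_succ, pow_succ, Matrix.mul_apply]
    exact Finset.dvd_sum fun l _ => mul_dvd_mul (ih i l) (h l j)

lemma triNilpotent (t : K) (d : ℕ) (ht : t ^ d = 0) {m : ℕ} {M : Matrix (Fin m) (Fin m) K}
    (htri : M.BlockTriangular id) (hdiag : ∀ i, t ∣ M i i) : M ^ (m * d) = 0 := by
  rw [pow_mul]
  ext i j
  have h1 : ∀ i j : Fin m, t ∣ (M ^ m) i j := fun i j =>
    triPowDvd t htri hdiag m i j (by omega)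
  have h2 := entriesPowDvd t (M ^ m) h1 d i j
  rw [ht] at h2
  simpa using zero_dvd_iff.mp h2

end MatrixAux

section QbinLemmas

variable {A : Type*} [DecidableEq A]

lemma qbin_nil (u : List A) : qbin u [] = 1 := by
  unfold qbin
  cases u.reverse with
  | nil => rfl
  | cons a l => rfl

lemma qbin_append (u w : List A) (c b : A) :
    qbin (u ++ [c]) (w ++ [b]) =
      X ^ (w.length + 1) * qbin u (w ++ [b]) + if c = b then qbin u w else 0 := by
  unfold qbin
  rw [List.reverse_append, List.reverse_append]
  simp only [List.reverse_singleton, List.singleton_append]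
  rw [show qbinAux (c :: u.reverse) (b :: w.reverse) =
      X ^ (w.reverse.length + 1) * qbinAux u.reverse (b :: w.reverse) +
        (if c = b then qbinAux u.reverse w.reverse else 0) from rfl]
  rw [List.length_reverse]

end QbinLemmas

section Main

variable (p d : ℕ)

/-- The modulus polynomial. -/
noncomputable abbrev fpoly : Polynomial (ZMod p) := (X - 1) ^ d

/-- The quotient ring `F_p[q]/(q-1)^d`. -/
noncomputable abbrev Kpd : Type := AdjoinRoot (fpoly p d)

noncomputable def xr : Kpd p d := AdjoinRoot.root _

noncomputable def tr : Kpd p d := xr p d - 1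

lemma fpoly_monic : (fpoly p d).Monic := by
  have := (monic_X_sub_C (1 : ZMod p)).pow (n := d)
  simpa [Polynomial.C_1] using this

lemma tr_pow_d : tr p d ^ d = 0 := by
  have h : (AdjoinRoot.mk (fpoly p d)) (fpoly p d) = 0 := AdjoinRoot.mk_self
  calc tr p d ^ d = (AdjoinRoot.mk (fpoly p d)) ((X - 1) ^ d) := by
        rw [map_pow, map_sub, AdjoinRoot.mk_X, _root_.map_one]; rfl
    _ = 0 := h

variable [Fact p.Prime]

lemma kpd_nontrivial (hd : 1 ≤ d) : Nontrivial (Kpd p d) := by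
  apply AdjoinRoot.nontrivial
  show ((X - 1 : Polynomial (ZMod p)) ^ d).degree ≠ 0
  rw [← C_1, degree_pow, degree_X_sub_C, nsmul_eq_mul, mul_one]
  simpa using (by omega : d ≠ 0)

lemma kpd_charP (hd : 1 ≤ d) : CharP (Kpd p d) p := by
  haveI := kpd_nontrivial p d hd
  haveI : CharP (ZMod p) p := ZMod.charP p
  exact charP_of_injective_ringHom (algebraMap (ZMod p) (Kpd p d)).injective p

lemma kpd_finite : Finite (Kpd p d) := by
  haveI : Module.Finite (ZMod p) (Kpd p d) :=
    Module.Finite.of_basis (AdjoinRoot.powerBasis' (fpoly_monic p d)).basis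
  exact Module.finite_of_finite (ZMod p)

/-- Triangular-with-unipotent-diagonal predicate. -/
def TriP (m : ℕ) (g : Matrix (Fin m) (Fin m) (Kpd p d)) : Prop :=
  g.BlockTriangular id ∧ ∀ i, tr p d ∣ (g i i - 1)

lemma triP_one (m : ℕ) : TriP p d m 1 :=
  ⟨blockTriangular_one, fun i => by simp⟩

lemma triP_mul {m : ℕ} {g h : Matrix (Fin m) (Fin m) (Kpd p d)}
    (hg : TriP p d m g) (hh : TriP p d m h) : TriP p d m (g * h) := by
  refine ⟨hg.1.mul hh.1, fun i => ?_⟩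
  rw [diagMulTri hg.1 hh.1 i]
  have : g i i * h i i - 1 = g i i * (h i i - 1) + (g i i - 1) := by ring
  rw [this]
  exact dvd_add (Dvd.dvd.mul_left (hh.2 i) _) (hg.2 i)

lemma triP_pow {m : ℕ} {g : Matrix (Fin m) (Fin m) (Kpd p d)}
    (hg : TriP p d m g) : ∀ k, TriP p d m (g ^ k) := by
  intro k
  induction k with
  | zero => rw [pow_zero]; exact triP_one p d m
  | succ k ih => rw [pow_succ]; exact triP_mul p d ih hg

lemma triP_unit_pow_eq_one (hd : 1 ≤ d) {m : ℕ} (hm : 0 < m)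
    (g : (Matrix (Fin m) (Fin m) (Kpd p d))ˣ) (hg : TriP p d m (g : Matrix (Fin m) (Fin m) (Kpd p d))) :
    g ^ p ^ (m * d) = 1 := by
  haveI := kpd_nontrivial p d hd
  haveI := kpd_charP p d hd
  haveI : Nonempty (Fin m) := ⟨⟨0, hm⟩⟩
  haveI : CharP (Matrix (Fin m) (Fin m) (Kpd p d)) p := Matrix.charP p
  set M0 : Matrix (Fin m) (Fin m) (Kpd p d) := (g : Matrix (Fin m) (Fin m) (Kpd p d)) - 1 with hM0
  have htri : M0.BlockTriangular id := hg.1.sub blockTriangular_one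
  have hdiag : ∀ i, tr p d ∣ M0 i i := fun i => by
    simpa [hM0, Matrix.sub_apply, Matrix.one_apply_eq] using hg.2 i
  have hnil : M0 ^ (m * d) = 0 := triNilpotent (tr p d) d (tr_pow_d p d) htri hdiag
  have hple : m * d ≤ p ^ (m * d) :=
    (Nat.lt_pow_self (n := m * d) (Fact.out : p.Prime).one_lt).le
  have hz : M0 ^ (p ^ (m * d)) = 0 := pow_eq_zero_of_le hple hnil
  have hval : (g : Matrix (Fin m) (Fin m) (Kpd p d)) ^ (p ^ (m * d)) = 1 := by
    have hgv : (g : Matrix (Fin m) (Fin m) (Kpd p d)) = 1 + M0 := by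
      rw [hM0]; abel
    rw [hgv, add_pow_char_pow_of_commute p (m * d) (Commute.one_left M0), one_pow, hz,
      add_zero]
  ext
  rw [Units.val_pow_eq_pow_val, hval, Units.val_one]

/-- The group of triangular unipotent-mod-t matrices, as a subgroup of the units. -/
noncomputable def triGroup (hd : 1 ≤ d) (m : ℕ) (hm : 0 < m) :
    Subgroup (Matrix (Fin m) (Fin m) (Kpd p d))ˣ where
  carrier := {g | TriP p d m (g : Matrix (Fin m) (Fin m) (Kpd p d))}
  one_mem' := by
    show TriP p d m ((1 : (Matrix (Fin m) (Fin m) (Kpd p d))ˣ) : Matrix (Fin m) (Fin m) (Kpd p d))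
    rw [Units.val_one]; exact triP_one p d m
  mul_mem' := by
    intro g h hg hh
    show TriP p d m _
    rw [Units.val_mul]
    exact triP_mul p d hg hh
  inv_mem' := by
    intro g hg
    have hord := triP_unit_pow_eq_one p d hd hm g hg
    have hpe : 1 ≤ p ^ (m * d) := Nat.one_le_pow _ _ (Fact.out : p.Prime).pos
    have hinv : g⁻¹ = g ^ (p ^ (m * d) - 1) := by
      symm
      apply eq_inv_of_mul_eq_one_left
      rw [← pow_succ, Nat.sub_add_cancel hpe, hord]
    show TriP p d m _
    rw [hinv, Units.val_pow_eq_pow_val]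
    exact triP_pow p d hg _

variable {A : Type} [DecidableEq A] (v : List A)

/-- The transition matrix for letter `c`. -/
noncomputable def Smat (c : A) :
    Matrix (Fin (v.length + 1)) (Fin (v.length + 1)) (Kpd p d) :=
  Matrix.of fun k j =>
    (if k = j then xr p d ^ (j : ℕ) else 0) +
      (if (j : ℕ) = (k : ℕ) + 1 ∧ v[(k : ℕ)]? = some c then 1 else 0)

lemma smat_diag (c : A) (i : Fin (v.length + 1)) :
    Smat p d v c i i = xr p d ^ (i : ℕ) := by
  show (if i = i then xr p d ^ (i : ℕ) else 0) +
      (if (i : ℕ) = (i : ℕ) + 1 ∧ v[(i : ℕ)]? = some c then 1 else 0) = _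
  rw [if_pos rfl, if_neg (fun h => by
    have h1 := h.1
    omega), add_zero]

lemma smat_triP (c : A) : TriP p d (v.length + 1) (Smat p d v c) := by
  constructor
  · intro i j hij
    have hij' : (j : ℕ) < (i : ℕ) := hij
    show (if i = j then xr p d ^ (j : ℕ) else 0) +
        (if (j : ℕ) = (i : ℕ) + 1 ∧ v[(i : ℕ)]? = some c then 1 else 0) = 0
    rw [if_neg (fun h => by subst h; exact absurd hij' (lt_irrefl _)),
      if_neg (fun h => by have h1 := h.1; omega), add_zero]
  · intro i
    rw [smat_diag]
    have := sub_dvd_pow_sub_pow (xr p d) 1 (i : ℕ)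
    rw [one_pow] at this
    exact this

lemma xr_isUnit : IsUnit (xr p d) := by
  have hnil : IsNilpotent (tr p d) := ⟨d, tr_pow_d p d⟩
  have := hnil.isUnit_add_one
  rwa [tr, sub_add_cancel] at this

lemma smat_isUnit (c : A) : IsUnit (Smat p d v c) := by
  rw [Matrix.isUnit_iff_isUnit_det]
  rw [Matrix.det_of_upperTriangular (smat_triP p d v c).1]
  have hprod : (∏ i : Fin (v.length + 1), Smat p d v c i i) =
      xr p d ^ (∑ i : Fin (v.length + 1), (i : ℕ)) := by
    rw [Finset.prod_congr rfl fun i _ => smat_diag p d v c i, Finset.prod_pow_eq_pow_sum]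
  rw [hprod]
  exact (xr_isUnit p d).pow _

/-- The evaluation ring homomorphism. -/
noncomputable def phi : Polynomial ℕ →+* Kpd p d :=
  (AdjoinRoot.mk (fpoly p d)).comp (Polynomial.mapRingHom (Nat.castRingHom (ZMod p)))

lemma phi_X : phi p d X = xr p d := by
  rw [phi, RingHom.comp_apply, Polynomial.coe_mapRingHom, Polynomial.map_X, AdjoinRoot.mk_X]
  rfl

/-- The vector of `q`-binomial coefficients of prefixes of `v`. -/
noncomputable def Wvec (u : List A) : Fin (v.length + 1) → Kpd p d :=
  fun j => phi p d (qbin u (v.take (j : ℕ)))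

lemma wvec_step (u : List A) (c : A) :
    Wvec p d v (u ++ [c]) = Matrix.vecMul (Wvec p d v u) (Smat p d v c) := by
  funext j
  have hsum : Matrix.vecMul (Wvec p d v u) (Smat p d v c) j =
      (∑ k, Wvec p d v u k * if k = j then xr p d ^ (j : ℕ) else 0) +
      (∑ k, Wvec p d v u k *
        if (j : ℕ) = (k : ℕ) + 1 ∧ v[(k : ℕ)]? = some c then 1 else 0) := by
    rw [Matrix.vecMul, dotProduct, ← Finset.sum_add_distrib]
    apply Finset.sum_congr rfl
    intro k _
    simp only [Smat, Matrix.of_apply, mul_add]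
  have h1 : (∑ k, Wvec p d v u k * if k = j then xr p d ^ (j : ℕ) else 0) =
      Wvec p d v u j * xr p d ^ (j : ℕ) := by
    rw [Finset.sum_eq_single j]
    · rw [if_pos rfl]
    · intro k _ hk; rw [if_neg hk, mul_zero]
    · intro h; exact absurd (Finset.mem_univ j) h
  rw [hsum, h1]
  rcases j with ⟨jv, hjv⟩
  rcases jv with _ | j'
  · -- j = 0
    have h2 : (∑ k : Fin (v.length + 1), Wvec p d v u k *
        if ((⟨0, hjv⟩ : Fin (v.length+1)) : ℕ) = (k : ℕ) + 1 ∧ v[(k : ℕ)]? = some c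
        then 1 else 0) = 0 := by
      apply Finset.sum_eq_zero
      intro k _
      rw [if_neg (by rintro ⟨h, -⟩; simp at h), mul_zero]
    rw [h2, add_zero]
    show phi p d (qbin (u ++ [c]) (v.take 0)) = phi p d (qbin u (v.take 0)) * xr p d ^ 0
    rw [List.take_zero, qbin_nil, qbin_nil, pow_zero, mul_one]
  · -- j = j' + 1
    have hj' : j' < v.length := by omega
    set jj : Fin (v.length + 1) := ⟨j' + 1, hjv⟩ with hjj
    set kk : Fin (v.length + 1) := ⟨j', by omega⟩ with hkk
    have hjjval : (jj : ℕ) = j' + 1 := rfl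
    have hkkval : (kk : ℕ) = j' := rfl
    have h2 : (∑ k : Fin (v.length + 1), Wvec p d v u k *
        if (jj : ℕ) = (k : ℕ) + 1 ∧ v[(k : ℕ)]? = some c then 1 else 0) =
        if v[j']? = some c then Wvec p d v u kk else 0 := by
      rw [Finset.sum_eq_single kk]
      · by_cases hvc : v[j']? = some c
        · rw [if_pos (by rw [hjjval, hkkval]; exact ⟨rfl, hvc⟩), if_pos hvc, mul_one]
        · rw [if_neg (by rw [hjjval, hkkval]; rintro ⟨-, h⟩; exact hvc h), if_neg hvc,
            mul_zero]
      · intro k _ hk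
        rw [if_neg, mul_zero]
        rintro ⟨h, -⟩
        apply hk
        apply Fin.ext
        rw [hkkval]
        omega
      · intro h; exact absurd (Finset.mem_univ kk) h
    rw [h2]
    -- LHS computation
    have htake : v.take (jj : ℕ) = v.take j' ++ [v[j']] := by
      rw [hjjval, List.take_succ, List.getElem?_eq_getElem hj']
      rfl
    have hlen : (v.take j').length = j' := by
      rw [List.length_take]; omega
    have hwjj : Wvec p d v u jj = phi p d (qbin u (v.take j' ++ [v[j']])) := by
      show phi p d (qbin u (v.take (jj : ℕ))) = _
      rw [htake]
    have hwkk : Wvec p d v u kk = phi p d (qbin u (v.take j')) := by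
      show phi p d (qbin u (v.take (kk : ℕ))) = _
      rw [hkkval]
    show phi p d (qbin (u ++ [c]) (v.take (jj : ℕ))) = _
    rw [htake, qbin_append, hlen, _root_.map_add, _root_.map_mul, map_pow, phi_X]
    have hite : phi p d (if c = v[j'] then qbin u (v.take j') else 0) =
        if v[j']? = some c then Wvec p d v u kk else 0 := by
      by_cases hcb : c = v[j']
      · rw [if_pos hcb, if_pos (by rw [List.getElem?_eq_getElem hj', hcb]), hwkk]
      · rw [if_neg hcb, if_neg (fun h => by
          rw [List.getElem?_eq_getElem hj'] at h
          exact hcb (Option.some_injective _ h).symm), _root_.map_zero]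
    rw [hite]
    congr 1
    rw [hwjj, mul_comm, hjjval]


noncomputable def genG (hd : 1 ≤ d) (c : A) :
    triGroup p d hd (v.length + 1) (Nat.succ_pos _) :=
  ⟨(smat_isUnit p d v c).unit, by
    show TriP p d (v.length + 1) _
    rw [IsUnit.unit_spec]
    exact smat_triP p d v c⟩

noncomputable def muHom (hd : 1 ≤ d) :
    FreeMonoid A →* (triGroup p d hd (v.length + 1) (Nat.succ_pos _)) :=
  FreeMonoid.lift (genG p d v hd)

lemma mu_mat (hd : 1 ≤ d) (u : List A) :
    Wvec p d v u = Matrix.vecMul (Wvec p d v [])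
      (((muHom p d v hd (FreeMonoid.ofList u) :
          (Matrix (Fin (v.length + 1)) (Fin (v.length + 1)) (Kpd p d))ˣ) :
        Matrix (Fin (v.length + 1)) (Fin (v.length + 1)) (Kpd p d))) := by
  induction u using List.reverseRecOn with
  | nil =>
    rw [show FreeMonoid.ofList ([] : List A) = 1 from rfl, _root_.map_one,
      OneMemClass.coe_one, Units.val_one, Matrix.vecMul_one]
  | append_singleton u c ih =>
    rw [wvec_step, ih, Matrix.vecMul_vecMul]
    congr 1
    rw [show FreeMonoid.ofList (u ++ [c]) = FreeMonoid.ofList u * FreeMonoid.of c from rfl,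
      _root_.map_mul,
      show muHom p d v hd (FreeMonoid.of c) = genG p d v hd c from rfl,
      MulMemClass.coe_mul, Units.val_mul,
      show (((genG p d v hd c : _) :
          (Matrix (Fin (v.length + 1)) (Fin (v.length + 1)) (Kpd p d))ˣ) :
          Matrix (Fin (v.length + 1)) (Fin (v.length + 1)) (Kpd p d)) = Smat p d v c
        from IsUnit.unit_spec _]

end Main


/-- For `M = a·(q-1)^d` with `a ≠ 0`, `d ≥ 1`, and `R` of degree `< d`, the
language `{u ∈ A* : binom_q(u,v) ≡ R (mod M)}` (the `q`-binomial being reduced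
coefficientwise mod `p`) is a `p`-group language: it is the preimage of a set
under a monoid morphism from `A*` to a finite group of order a power of `p`. -/
theorem qbin_language_is_p_group_language (p : ℕ) [Fact p.Prime]
    (A : Type) [Fintype A] [DecidableEq A] (v : List A)
    (d : ℕ) (hd : 1 ≤ d) (a : ZMod p) (ha : a ≠ 0)
    (R : Polynomial (ZMod p)) (hR : R.degree < (d : ℕ)) :
    ∃ (G : Type) (_ : Group G) (_ : Fintype G) (t : ℕ),
      Fintype.card G = p ^ t ∧
      ∃ (μ : FreeMonoid A →* G) (S : Set G),
        {w : FreeMonoid A |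
          (Polynomial.C a * (Polynomial.X - 1) ^ d) ∣
            ((qbin (FreeMonoid.toList w) v).map (Nat.castRingHom (ZMod p)) - R)} =
          μ ⁻¹' S := by
  classical
  set m : ℕ := v.length + 1 with hm
  have hm0 : 0 < m := Nat.succ_pos _
  haveI hfinK : Finite (Kpd p d) := kpd_finite p d
  haveI : Finite (Matrix (Fin m) (Fin m) (Kpd p d)) :=
    Finite.of_equiv _ (Matrix.of (m := Fin m) (n := Fin m) (α := Kpd p d))
  let GG := triGroup p d hd (v.length + 1) (Nat.succ_pos _)
  haveI : Fintype GG := Fintype.ofFinite _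
  have hpg : IsPGroup p GG := by
    intro g
    refine ⟨m * d, ?_⟩
    have h1 := triP_unit_pow_eq_one p d hd hm0 (g : _) g.2
    exact Subtype.ext (by rw [SubmonoidClass.coe_pow, h1, OneMemClass.coe_one])
  obtain ⟨tt, htt⟩ := IsPGroup.iff_card.mp hpg
  let μ := muHom p d v hd
  let lastI : Fin (v.length + 1) := ⟨v.length, Nat.lt_succ_self _⟩
  have hchar : ∀ w : FreeMonoid A,
      ((Polynomial.C a * (Polynomial.X - 1) ^ d) ∣
          ((qbin (FreeMonoid.toList w) v).map (Nat.castRingHom (ZMod p)) - R)) ↔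
        Matrix.vecMul (Wvec p d v [])
            ((μ w : (Matrix (Fin (v.length + 1)) (Fin (v.length + 1)) (Kpd p d))ˣ) :
              Matrix (Fin (v.length + 1)) (Fin (v.length + 1)) (Kpd p d)) lastI =
          AdjoinRoot.mk (fpoly p d) R := by
    intro w
    have hq : AdjoinRoot.mk (fpoly p d)
        ((qbin (FreeMonoid.toList w) v).map (Nat.castRingHom (ZMod p))) =
        Wvec p d v (FreeMonoid.toList w) lastI := by
      show _ = phi p d (qbin (FreeMonoid.toList w) (v.take (lastI : ℕ)))
      rw [show ((lastI : ℕ)) = v.length from rfl, List.take_length]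
      rfl
    calc (Polynomial.C a * (Polynomial.X - 1) ^ d) ∣
          ((qbin (FreeMonoid.toList w) v).map (Nat.castRingHom (ZMod p)) - R) ↔
        ((Polynomial.X - 1) ^ d ∣
          ((qbin (FreeMonoid.toList w) v).map (Nat.castRingHom (ZMod p)) - R)) :=
          (Polynomial.isUnit_C.mpr (Ne.isUnit ha)).mul_left_dvd
      _ ↔ AdjoinRoot.mk (fpoly p d)
            ((qbin (FreeMonoid.toList w) v).map (Nat.castRingHom (ZMod p)) - R) = 0 :=
          AdjoinRoot.mk_eq_zero.symm
      _ ↔ AdjoinRoot.mk (fpoly p d)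
            ((qbin (FreeMonoid.toList w) v).map (Nat.castRingHom (ZMod p))) =
          AdjoinRoot.mk (fpoly p d) R := by rw [map_sub, sub_eq_zero]
      _ ↔ _ := by
          rw [hq, mu_mat p d v hd (FreeMonoid.toList w), FreeMonoid.ofList_toList]
  refine ⟨GG, inferInstance, inferInstance, tt, ?_, μ,
    μ '' {w : FreeMonoid A |
      (Polynomial.C a * (Polynomial.X - 1) ^ d) ∣
        ((qbin (FreeMonoid.toList w) v).map (Nat.castRingHom (ZMod p)) - R)}, ?_⟩
  · rw [← Nat.card_eq_fintype_card]; exact htt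
  · ext w
    simp only [Set.mem_setOf_eq, Set.mem_preimage, Set.mem_image]
    constructor
    · intro hw
      exact ⟨w, hw, rfl⟩
    · rintro ⟨w', hw', heq⟩
      rw [hchar w, ← heq]
      exact (hchar w').mp hw'
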